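/- If P and Q are generalized permutohedra in ℝ^n, then their Minkowski sum P + Q = {p + q : p ∈ P, q ∈ Q} is a generalized permutohedron. -/

import Mathlib

open scoped Pointwise

/-- A polytope `P ⊆ ℝⁿ` is a generalized permutohedron if every edge `[x,y]` of `P`
(i.e. a segment with distinct endpoints that is an extreme subset of `P`) is parallel to
`e_i - e_j` for some `i ≠ j`. -/
def IsGeneralizedPermutohedron (n : ℕ) (P : Set (Fin n → ℝ)) : Prop :=
  ∀ x y : Fin n → ℝ, x ≠ y → IsExtreme ℝ P (segment ℝ x y) →
    ∃ i j : Fin n, i ≠ j ∧ ∃ c : ℝ,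
      y - x = c • ((Pi.single i 1 : Fin n → ℝ) - Pi.single j 1)

/-- Scalar multiples of a nonzero vector are determined by the scalar. -/
lemma gp_smul_inj {n : ℕ} {d : Fin n → ℝ} (hd : d ≠ 0) {s t : ℝ}
    (h : s • d = t • d) : s = t := by
  have h0 : (s - t) • d = 0 := by rw [sub_smul, h, sub_self]
  rcases smul_eq_zero.mp h0 with h' | h'
  · exact sub_eq_zero.mp h'
  · exact absurd h' hd

/-- The left endpoint of a nondegenerate segment is an extreme point of it. -/
lemma gp_endpoint_left {n : ℕ} {x y u v : Fin n → ℝ} (hxy : x ≠ y)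
    (hu : u ∈ segment ℝ x y) (hv : v ∈ segment ℝ x y)
    (hx : x ∈ openSegment ℝ u v) : u = x ∧ v = x := by
  have hd : y - x ≠ 0 := sub_ne_zero_of_ne (Ne.symm hxy)
  rw [segment_eq_image'] at hu hv
  obtain ⟨s, ⟨hs0, hs1⟩, hsu⟩ := hu
  obtain ⟨r, ⟨hr0, hr1⟩, hrv⟩ := hv
  rw [openSegment_eq_image'] at hx
  obtain ⟨μ, ⟨hμ0, hμ1⟩, hμx⟩ := hx
  replace hsu : x + s • (y - x) = u := hsu
  replace hrv : x + r • (y - x) = v := hrv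
  replace hμx : u + μ • (v - u) = x := hμx
  -- x = u + μ • (v - u), with u = x + s•d, v = x + r•d
  have h1 : u + μ • (v - u) = x + (s + μ * (r - s)) • (y - x) := by
    rw [← hsu, ← hrv]; module
  rw [hμx] at h1
  have h2 : (s + μ * (r - s)) • (y - x) = 0 := by
    have h3 := congrArg (fun z => z - x) h1
    simpa using h3.symm
  have hco : s + μ * (r - s) = 0 := by
    rcases smul_eq_zero.mp h2 with h | h
    · exact h
    · exact absurd h hd
  have hs : s = 0 := by nlinarith
  have hr : r = 0 := by nlinarith
  constructor
  · rw [← hsu, hs]; simp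
  · rw [← hrv, hr]; simp

/-- Main auxiliary lemma: if an edge `[x,y]` of `P + Q` decomposes at its endpoints as
`x = px + qx`, `y = py + qy` with `px ≠ py`, then the direction `y - x` is of the
required root form, using that `P` is a generalized permutohedron. -/
lemma gp_aux {n : ℕ} {P Q : Set (Fin n → ℝ)} (hPc : Convex ℝ P) (hQc : Convex ℝ Q)
    (hGP : IsGeneralizedPermutohedron n P) {x y : Fin n → ℝ} (hxy : x ≠ y)
    (hE : IsExtreme ℝ (P + Q) (segment ℝ x y))
    {px qx py qy : Fin n → ℝ} (hpx : px ∈ P) (hqx : qx ∈ Q) (hpy : py ∈ P) (hqy : qy ∈ Q)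
    (hx : px + qx = x) (hy : py + qy = y) (hne : px ≠ py) :
    ∃ i j : Fin n, i ≠ j ∧ ∃ c : ℝ,
      y - x = c • ((Pi.single i 1 : Fin n → ℝ) - Pi.single j 1) := by
  set d := y - x with hd_def
  have hd : d ≠ 0 := sub_ne_zero_of_ne (Ne.symm hxy)
  set E := segment ℝ x y with hE_def
  have hEconv : Convex ℝ E := convex_segment x y
  set SP : Set (Fin n → ℝ) := {p | p ∈ P ∧ ∃ q ∈ Q, p + q ∈ E} with hSP_def
  set SQ : Set (Fin n → ℝ) := {q | q ∈ Q ∧ ∃ p ∈ P, p + q ∈ E} with hSQ_def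
  have hxE : x ∈ E := left_mem_segment ℝ x y
  have hyE : y ∈ E := right_mem_segment ℝ x y
  have hpxSP : px ∈ SP := ⟨hpx, qx, hqx, by rw [hx]; exact hxE⟩
  have hqxSQ : qx ∈ SQ := ⟨hqx, px, hpx, by rw [hx]; exact hxE⟩
  have hpySP : py ∈ SP := ⟨hpy, qy, hqy, by rw [hy]; exact hyE⟩
  -- every sum of an SP element and an SQ element lies in E
  have h_sum : ∀ p ∈ SP, ∀ q ∈ SQ, p + q ∈ E := by
    rintro p ⟨hp, q', hq', hpq'⟩ q ⟨hq, p', hp', hp'q⟩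
    have hmem : p + q ∈ P + Q := Set.add_mem_add hp hq
    have hmem' : p' + q' ∈ P + Q := Set.add_mem_add hp' hq'
    have hmid : (1/2 : ℝ) • (p + q') + (1/2 : ℝ) • (p' + q) ∈ E :=
      hEconv hpq' hp'q (by norm_num) (by norm_num) (by norm_num)
    have hopen : (1/2 : ℝ) • (p + q') + (1/2 : ℝ) • (p' + q) ∈
        openSegment ℝ (p + q) (p' + q') :=
      ⟨1/2, 1/2, by norm_num, by norm_num, by norm_num, by module⟩
    exact hE.2 hmem hmem' hmid hopen
  -- SP is an extreme subset of P
  have hSPext : IsExtreme ℝ P SP := by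
    constructor
    · exact fun p hp => hp.1
    · rintro p1 hp1 p2 hp2 p ⟨hp, q, hq, hpq⟩ hpo
      obtain ⟨u, v, hu, hv, huv, heq⟩ := hpo
      have h1 : p + q ∈ openSegment ℝ (p1 + q) (p2 + q) := by
        refine ⟨u, v, hu, hv, huv, ?_⟩
        calc u • (p1 + q) + v • (p2 + q) = (u • p1 + v • p2) + (u + v) • q := by module
          _ = p + q := by rw [huv, heq, one_smul]
      have h2 := hE.2 (Set.add_mem_add hp1 hq) (Set.add_mem_add hp2 hq) hpq h1
      exact ⟨hp1, q, hq, h2⟩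
  -- points of E are parameterized along d
  have hcol : ∀ z ∈ E, ∃ t : ℝ, 0 ≤ t ∧ t ≤ 1 ∧ z = x + t • d := by
    intro z hz
    rw [hE_def, segment_eq_image'] at hz
    obtain ⟨t, ⟨ht0, ht1⟩, hteq⟩ := hz
    exact ⟨t, ht0, ht1, hteq.symm⟩
  -- points of SP are parameterized along d starting at px
  have hparam : ∀ p ∈ SP, ∃ t : ℝ, p = px + t • d := by
    intro p hp
    obtain ⟨t, _, _, ht⟩ := hcol _ (h_sum p hp qx hqxSQ)
    refine ⟨t, ?_⟩
    have h2 : p + qx = (px + t • d) + qx := by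
      rw [ht, ← hx]; abel
    exact add_right_cancel h2
  -- px is an extreme point of SP
  have h_px_ext : ∀ p1 ∈ SP, ∀ p2 ∈ SP, px ∈ openSegment ℝ p1 p2 → p1 = px ∧ p2 = px := by
    intro p1 h1 p2 h2 hpo
    have e1 : p1 + qx ∈ E := h_sum p1 h1 qx hqxSQ
    have e2 : p2 + qx ∈ E := h_sum p2 h2 qx hqxSQ
    have hxo : x ∈ openSegment ℝ (p1 + qx) (p2 + qx) := by
      obtain ⟨u, v, hu, hv, huv, heq⟩ := hpo
      refine ⟨u, v, hu, hv, huv, ?_⟩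
      calc u • (p1 + qx) + v • (p2 + qx) = (u • p1 + v • p2) + (u + v) • qx := by module
        _ = x := by rw [huv, heq, one_smul, hx]
    have h3 := gp_endpoint_left hxy e1 e2 hxo
    constructor
    · have h4 : p1 + qx = px + qx := by rw [h3.1, ← hx]
      exact add_right_cancel h4
    · have h4 : p2 + qx = px + qx := by rw [h3.2, ← hx]
      exact add_right_cancel h4
  -- py is an extreme point of SP
  have h_py_ext : ∀ p1 ∈ SP, ∀ p2 ∈ SP, py ∈ openSegment ℝ p1 p2 → p1 = py ∧ p2 = py := by
    intro p1 h1 p2 h2 hpo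
    have hqySQ : qy ∈ SQ := ⟨hqy, py, hpy, by rw [hy]; exact hyE⟩
    have e1 : p1 + qy ∈ segment ℝ y x := by rw [segment_symm]; exact h_sum p1 h1 qy hqySQ
    have e2 : p2 + qy ∈ segment ℝ y x := by rw [segment_symm]; exact h_sum p2 h2 qy hqySQ
    have hxo : y ∈ openSegment ℝ (p1 + qy) (p2 + qy) := by
      obtain ⟨u, v, hu, hv, huv, heq⟩ := hpo
      refine ⟨u, v, hu, hv, huv, ?_⟩
      calc u • (p1 + qy) + v • (p2 + qy) = (u • p1 + v • p2) + (u + v) • qy := by module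
        _ = y := by rw [huv, heq, one_smul, hy]
    have h3 := gp_endpoint_left (Ne.symm hxy) e1 e2 hxo
    constructor
    · have h4 : p1 + qy = py + qy := by rw [h3.1, ← hy]
      exact add_right_cancel h4
    · have h4 : p2 + qy = py + qy := by rw [h3.2, ← hy]
      exact add_right_cancel h4
  -- SP is convex
  have hSPconv : Convex ℝ SP := by
    rintro p1 ⟨hp1, q1, hq1, he1⟩ p2 ⟨hp2, q2, hq2, he2⟩ u v hu hv huv
    refine ⟨hPc hp1 hp2 hu hv huv, q1, hq1, ?_⟩
    have h2 : p2 + q1 ∈ E := h_sum p2 ⟨hp2, q2, hq2, he2⟩ q1 ⟨hq1, p1, hp1, he1⟩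
    have h3 : u • (p1 + q1) + v • (p2 + q1) ∈ E := hEconv he1 h2 hu hv huv
    have heq : u • (p1 + q1) + v • (p2 + q1) = (u • p1 + v • p2) + q1 := by
      calc u • (p1 + q1) + v • (p2 + q1) = (u • p1 + v • p2) + (u + v) • q1 := by module
        _ = (u • p1 + v • p2) + q1 := by rw [huv, one_smul]
    rwa [heq] at h3
  -- the parameter of py
  obtain ⟨a, ha⟩ := hparam py hpySP
  have ha0 : a ≠ 0 := by
    rintro rfl
    apply hne
    rw [ha, zero_smul, add_zero]
  -- SP equals the segment [px, py]
  have hSPseg : SP = segment ℝ px py := by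
    apply Set.Subset.antisymm
    · intro p hp
      obtain ⟨t, ht⟩ := hparam p hp
      -- show t/a ∈ [0,1]
      have hbound : 0 ≤ t / a ∧ t / a ≤ 1 := by
        by_contra hcon
        push_neg at hcon
        rcases lt_or_ge (t / a) 0 with hlt | hge
        · -- px lies strictly between p and py : contradiction
          rcases div_neg_iff.mp hlt with ⟨ht0, ha0'⟩ | ⟨ht0, ha0'⟩
          · -- 0 < t, a < 0
            have hμ0 : 0 < t / (t - a) := div_pos ht0 (by linarith)
            have hμ1 : t / (t - a) < 1 := (div_lt_one (by linarith)).mpr (by linarith)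
            have hne' : t - a ≠ 0 := by intro h; rw [sub_eq_zero] at h; linarith
            have hmem : px ∈ openSegment ℝ p py := by
              rw [openSegment_eq_image']
              refine ⟨t / (t - a), ⟨hμ0, hμ1⟩, ?_⟩
              show p + (t / (t - a)) • (py - p) = px
              rw [ht, ha]
              have hμ : t + t / (t - a) * (a - t) = 0 := by field_simp; ring
              have h5 : (t + t / (t - a) * (a - t)) • d = (0 : ℝ) • d := by rw [hμ]
              calc px + t • d + (t / (t - a)) • (px + a • d - (px + t • d))
                  = px + (t + t / (t - a) * (a - t)) • d := by module
                _ = px := by rw [h5, zero_smul, add_zero]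
            have hppx := (h_px_ext p hp py hpySP hmem).1
            rw [hppx] at ht
            have ht' : t • d = 0 := by
              have h6 := congrArg (fun z => z - px) ht
              simpa using h6.symm
            rcases smul_eq_zero.mp ht' with h | h
            · exact absurd h (ne_of_gt ht0)
            · exact absurd h hd
          · -- t < 0, 0 < a
            have hμ0 : 0 < t / (t - a) :=
              div_pos_iff.mpr (Or.inr ⟨by linarith, by linarith⟩)
            have hμ1 : t / (t - a) < 1 := by
              have hne' : t - a ≠ 0 := by intro h; rw [sub_eq_zero] at h; linarith
              have heq : t / (t - a) - 1 = a / (t - a) := by field_simp; ring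
              have : a / (t - a) < 0 := div_neg_of_pos_of_neg ha0' (by linarith)
              linarith
            have hne2 : t - a ≠ 0 := by intro h; rw [sub_eq_zero] at h; linarith
            have hmem : px ∈ openSegment ℝ p py := by
              rw [openSegment_eq_image']
              refine ⟨t / (t - a), ⟨hμ0, hμ1⟩, ?_⟩
              show p + (t / (t - a)) • (py - p) = px
              rw [ht, ha]
              have hμ : t + t / (t - a) * (a - t) = 0 := by field_simp; ring
              have h5 : (t + t / (t - a) * (a - t)) • d = (0 : ℝ) • d := by rw [hμ]
              calc px + t • d + (t / (t - a)) • (px + a • d - (px + t • d))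
                  = px + (t + t / (t - a) * (a - t)) • d := by module
                _ = px := by rw [h5, zero_smul, add_zero]
            have hppx := (h_px_ext p hp py hpySP hmem).1
            rw [hppx] at ht
            have ht' : t • d = 0 := by
              have h6 := congrArg (fun z => z - px) ht
              simpa using h6.symm
            rcases smul_eq_zero.mp ht' with h | h
            · exact absurd h (ne_of_lt ht0)
            · exact absurd h hd
        · -- 1 < t/a : py lies strictly between px and p
          have hgt : 1 < t / a := hcon hge
          have hta : 0 < (t - a) / a := by
            have : t / a - 1 = (t - a) / a := by field_simp
            linarith
          have hcase := div_pos_iff.mp hta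
          have hμmem : a / t ∈ Set.Ioo (0:ℝ) 1 := by
            rcases hcase with ⟨h1, h2⟩ | ⟨h1, h2⟩
            · -- 0 < t - a, 0 < a  (so 0 < a < t)
              exact ⟨div_pos h2 (by linarith), (div_lt_one (by linarith)).mpr (by linarith)⟩
            · -- t - a < 0, a < 0 (so t < a < 0)
              have ht0 : t < 0 := by linarith
              refine ⟨div_pos_iff.mpr (Or.inr ⟨h2, ht0⟩), ?_⟩
              have hne' : t ≠ 0 := ne_of_lt ht0
              have heq : a / t - 1 = (a - t) / t := by field_simp
              have : (a - t) / t < 0 := div_neg_of_pos_of_neg (by linarith) ht0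
              linarith
          have ht0' : t ≠ 0 := by
            intro h
            rw [h, zero_div] at hgt
            linarith
          have hmem : py ∈ openSegment ℝ px p := by
            rw [openSegment_eq_image']
            refine ⟨a / t, hμmem, ?_⟩
            show px + (a / t) • (p - px) = py
            rw [ht, ha]
            have hμ : a / t * t = a := by field_simp
            have h5 : (a / t * t) • d = a • d := by rw [hμ]
            calc px + (a / t) • (px + t • d - px)
                = px + (a / t * t) • d := by module
              _ = px + a • d := by rw [h5]
          have h3 := h_py_ext px hpxSP p hp hmem
          exact hne h3.1
      -- now p ∈ segment px py
      rw [segment_eq_image']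
      refine ⟨t / a, ⟨hbound.1, hbound.2⟩, ?_⟩
      show px + (t / a) • (py - px) = p
      rw [ha, ht]
      have hμ : t / a * a = t := by field_simp
      have h5 : (t / a * a) • d = t • d := by rw [hμ]
      calc px + (t / a) • (px + a • d - px)
          = px + (t / a * a) • d := by module
        _ = px + t • d := by rw [h5]
    · exact hSPconv.segment_subset hpxSP hpySP
  -- apply the generalized permutohedron hypothesis
  have hext : IsExtreme ℝ P (segment ℝ px py) := hSPseg ▸ hSPext
  obtain ⟨i, j, hij, c, hc⟩ := hGP px py hne hext
  refine ⟨i, j, hij, a⁻¹ * c, ?_⟩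
  have h1 : py - px = a • d := by rw [ha]; module
  rw [mul_smul, ← hc, h1, smul_smul, inv_mul_cancel₀ ha0, one_smul]

/-- The Minkowski sum of two generalized permutohedra in `ℝⁿ` is a
generalized permutohedron. -/
theorem minkowski_sum_generalized_permutohedra
    (n : ℕ) (P Q : Set (Fin n → ℝ)) (SP SQ : Finset (Fin n → ℝ))
    (hP : P = convexHull ℝ (SP : Set (Fin n → ℝ)))
    (hQ : Q = convexHull ℝ (SQ : Set (Fin n → ℝ)))
    (hGP : IsGeneralizedPermutohedron n P) (hGQ : IsGeneralizedPermutohedron n Q) :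
    IsGeneralizedPermutohedron n (P + Q) := by
  have hPc : Convex ℝ P := hP ▸ convex_convexHull ℝ _
  have hQc : Convex ℝ Q := hQ ▸ convex_convexHull ℝ _
  intro x y hxy hE
  have hx : x ∈ P + Q := hE.1 (left_mem_segment ℝ x y)
  have hy : y ∈ P + Q := hE.1 (right_mem_segment ℝ x y)
  obtain ⟨px, hpx, qx, hqx, hxe⟩ := Set.mem_add.mp hx
  obtain ⟨py, hpy, qy, hqy, hye⟩ := Set.mem_add.mp hy
  by_cases hpp : px = py
  · have hqq : qx ≠ qy := by
      rintro rfl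
      apply hxy
      rw [← hxe, ← hye, hpp]
    have hE' : IsExtreme ℝ (Q + P) (segment ℝ x y) := by rwa [add_comm]
    exact gp_aux hQc hPc hGQ hxy hE' hqx hpx hqy hpy
      (by rw [← hxe]; abel) (by rw [← hye]; abel) hqq
  · exact gp_aux hPc hQc hGP hxy hE hpx hqx hpy hqy hxe hye hpp
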